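/- Let φ = (1+√5)/2. For every integer n ≥ 3 there exists a unique positive real number t such that max(h_n, φ·h_{n−1})^t = max(h_{n−1}, φ·h_{n−2})^t + max(h_{n−2}, φ·h_{n−3})^t, and moreover this t satisfies t ≥ 1. -/

import Mathlib

open Real

/-- The golden ratio `(1 + √5)/2`. -/
noncomputable def phiR : ℝ := (1 + Real.sqrt 5) / 2

/-- `mmax p q n = max(h_n·log p, h_{n-1}·log q)`, the logarithmic Mahler measure
of `p^{h_n}/q^{h_{n-1}}` for distinct primes `p`, `q`, where `h` is Fibonacci. -/
noncomputable def mmax (p q n : ℕ) : ℝ :=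
  max ((Nat.fib n : ℝ) * Real.log p) ((Nat.fib (n - 1) : ℝ) * Real.log q)

/-- `gmax n = max(h_n, φ·h_{n-1})`. -/
noncomputable def gmax (n : ℕ) : ℝ :=
  max (Nat.fib n : ℝ) (phiR * (Nat.fib (n - 1) : ℝ))

/-- The equation defining `t_n(p,q)`:
`m(p^{h_n}/q^{h_{n-1}})^t = m(p^{h_{n-1}}/q^{h_{n-2}})^t + m(p^{h_{n-2}}/q^{h_{n-3}})^t`. -/
def peq (p q n : ℕ) (t : ℝ) : Prop :=
  mmax p q n ^ t = mmax p q (n - 1) ^ t + mmax p q (n - 2) ^ t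

/-- The equation defining `s_n`:
`max(h_n, φ h_{n-1})^t = max(h_{n-1}, φ h_{n-2})^t + max(h_{n-2}, φ h_{n-3})^t`. -/
def geq (n : ℕ) (t : ℝ) : Prop :=
  gmax n ^ t = gmax (n - 1) ^ t + gmax (n - 2) ^ t

/-- Condition (W) on a pair of primes `(p,q)` relative to `N`. -/
def CondW (N p q : ℕ) : Prop :=
  ((Nat.fib N : ℝ) / Nat.fib (N - 1) < Real.log q / Real.log p ∧
    Real.log q / Real.log p < (Nat.fib (N - 1) : ℝ) / Nat.fib (N - 2)) ∨
  ((Nat.fib (N - 1) : ℝ) / Nat.fib (N - 2) < Real.log q / Real.log p ∧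
    Real.log q / Real.log p < (Nat.fib N : ℝ) / Nat.fib (N - 1))

/-- `V_n`: vectors `x ∈ ℕ^N` (1-based entry `i` is `x ⟨i-1⟩`) with
`Σ x_i h_i = h_n` and `Σ x_i h_{i-1} = h_{n-1}`. -/
def Vset (N n : ℕ) : Set (Fin N → ℕ) :=
  {x | ∑ i, x i * Nat.fib ((i : ℕ) + 1) = Nat.fib n ∧
       ∑ i, x i * Nat.fib (i : ℕ) = Nat.fib (n - 1)}

/-- The measure function `f_x(t) = (Σ_{i=1}^N x_i·max(h_i log p, h_{i-1} log q)^t)^{1/t}`. -/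
noncomputable def fmeas (N p q : ℕ) (x : Fin N → ℕ) (t : ℝ) : ℝ :=
  (∑ i, (x i : ℝ) * mmax p q ((i : ℕ) + 1) ^ t) ^ (1 / t)

/-- `x_n(i)`: the vector whose (i−2)nd (1-based) entry is `h_{n+1−i}`, whose
(i−1)st entry is `h_{n+2−i}`, and whose other entries are 0.  (For `i = 2`, `n = 1`
this gives `x_1(2) = (1,0,…,0)`.) -/
def xvec (N n i : ℕ) : Fin N → ℕ := fun j =>
  if (j : ℕ) + 3 = i then Nat.fib (n + 1 - i)
  else if (j : ℕ) + 2 = i then Nat.fib (n + 2 - i)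
  else 0

/-- `S_n = {x_n(i) : 3 ≤ i ≤ n+1}` for `n ≥ 2`, and `S_1 = {x_1(2)}`. -/
def Sset (N n : ℕ) : Set (Fin N → ℕ) :=
  if n = 1 then {xvec N 1 2}
  else {x | ∃ i, 3 ≤ i ∧ i ≤ n + 1 ∧ x = xvec N n i}

/-- `z` is almost consecutive-free: `z_j·z_{j+1} ≠ 0` implies `z_i = 0` for all `i > j+1`. -/
def ACF (N : ℕ) (z : Fin N → ℕ) : Prop :=
  ∀ (j : Fin N) (hj : (j : ℕ) + 1 < N),
    z j * z ⟨(j : ℕ) + 1, hj⟩ ≠ 0 → ∀ i : Fin N, (j : ℕ) + 1 < (i : ℕ) → z i = 0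

/-- `C_n`: the almost consecutive-free elements of `V_n`. -/
def Cset (N n : ℕ) : Set (Fin N → ℕ) := {z ∈ Vset N n | ACF N z}

/-- A factorization of `z ∈ V_n`: a `K`-tuple `x` with `x k ∈ V_{idx k}`,
`1 ≤ idx k ≤ n`, and `z = Σ_k x k`. -/
def IsFactorization (N n : ℕ) (z : Fin N → ℕ) {K : ℕ}
    (idx : Fin K → ℕ) (x : Fin K → Fin N → ℕ) : Prop :=
  (∀ k, 1 ≤ idx k ∧ idx k ≤ n ∧ x k ∈ Vset N (idx k)) ∧ z = ∑ k, x k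

/-- A tuple is `S`-type if each component lies in `∪_{i=1}^n S_i`. -/
def STypeFac (N n : ℕ) {K : ℕ} (x : Fin K → Fin N → ℕ) : Prop :=
  ∀ k, ∃ i, 1 ≤ i ∧ i ≤ n ∧ x k ∈ Sset N i

/-- `z` is `S`-restricted: every non-trivial (i.e. `K ≠ 1`) factorization is `S`-type. -/
def SRestricted (N n : ℕ) (z : Fin N → ℕ) : Prop :=
  ∀ (K : ℕ) (idx : Fin K → ℕ) (x : Fin K → Fin N → ℕ),
    IsFactorization N n z idx x → K ≠ 1 → STypeFac N n x

/-- `R_n`: the `S`-restricted elements of `C_n`. -/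
def Rset (N n : ℕ) : Set (Fin N → ℕ) := {z ∈ Cset N n | SRestricted N n z}

/-- The infimum attaining set `U_x = {t > 0 : f_x(t) = min{f_y(t) : y ∈ V_j}}`. -/
def Uset (N p q j : ℕ) (x : Fin N → ℕ) : Set ℝ :=
  {t | 0 < t ∧ IsLeast ((fun y => fmeas N p q y t) '' Vset N j) (fmeas N p q x t)}

/-- The shift map `λ((x_1,…,x_N)) = (0,x_1,…,x_{N-1})`. -/
def shiftMap (N : ℕ) (x : Fin N → ℕ) : Fin N → ℕ := fun j =>
  if (j : ℕ) = 0 then 0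
  else x ⟨(j : ℕ) - 1, lt_of_le_of_lt (Nat.sub_le _ _) j.isLt⟩

lemma key_unique (A B C : ℝ) (hB : 0 < B) (hC : 0 < C) (hBA : B < A) (hCA : C < A)
    (hsum : A ≤ B + C) :
    ∃ t : ℝ, (0 < t ∧ A ^ t = B ^ t + C ^ t) ∧
      (∀ s : ℝ, 0 < s → A ^ s = B ^ s + C ^ s → s = t) ∧ 1 ≤ t := by
  have hA : 0 < A := hB.trans hBA
  set b := B / A with hbdef
  set c := C / A with hcdef
  have hb0 : 0 < b := div_pos hB hA
  have hc0 : 0 < c := div_pos hC hA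
  have hb1 : b < 1 := (div_lt_one hA).2 hBA
  have hc1 : c < 1 := (div_lt_one hA).2 hCA
  have hlb : Real.log b < 0 := Real.log_neg hb0 hb1
  have hlc : Real.log c < 0 := Real.log_neg hc0 hc1
  set F : ℝ → ℝ := fun t => Real.exp (t * Real.log b) + Real.exp (t * Real.log c) with hFdef
  have hFanti : StrictAnti F := by
    intro s t hst
    have h1 : t * Real.log b < s * Real.log b := by nlinarith
    have h2 : t * Real.log c < s * Real.log c := by nlinarith
    exact add_lt_add (Real.exp_lt_exp.2 h1) (Real.exp_lt_exp.2 h2)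
  have hFeq : ∀ t : ℝ, (A ^ t = B ^ t + C ^ t ↔ F t = 1) := by
    intro t
    have hAt : (0:ℝ) < A ^ t := Real.rpow_pos_of_pos hA t
    have hFt : F t = (B ^ t + C ^ t) / A ^ t := by
      simp only [hFdef]
      rw [mul_comm t, ← Real.rpow_def_of_pos hb0, mul_comm t, ← Real.rpow_def_of_pos hc0,
        hbdef, hcdef, Real.div_rpow hB.le hA.le, Real.div_rpow hC.le hA.le, ← add_div]
    rw [hFt, div_eq_one_iff_eq hAt.ne']
    exact ⟨fun h => h.symm, fun h => h.symm⟩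
  have hF1 : 1 ≤ F 1 := by
    have : F 1 = b + c := by
      simp only [hFdef, one_mul, Real.exp_log hb0, Real.exp_log hc0]
    rw [this, hbdef, hcdef, ← add_div, le_div_iff₀ hA]
    linarith
  have hFcont : Continuous F := by
    exact (Real.continuous_exp.comp (continuous_id.mul continuous_const)).add
      (Real.continuous_exp.comp (continuous_id.mul continuous_const))
  have htend : Filter.Tendsto F Filter.atTop (nhds 0) := by
    have t1 : Filter.Tendsto (fun t : ℝ => t * Real.log b) Filter.atTop Filter.atBot :=
      Filter.Tendsto.atTop_mul_const_of_neg hlb Filter.tendsto_id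
    have t2 : Filter.Tendsto (fun t : ℝ => t * Real.log c) Filter.atTop Filter.atBot :=
      Filter.Tendsto.atTop_mul_const_of_neg hlc Filter.tendsto_id
    have := (Real.tendsto_exp_atBot.comp t1).add (Real.tendsto_exp_atBot.comp t2)
    simpa using this
  have hex : ∃ T : ℝ, 1 ≤ T ∧ F T < 1 := by
    have := (htend.eventually_lt_const one_pos).and (Filter.eventually_ge_atTop (1:ℝ))
    obtain ⟨T, hT⟩ := this.exists
    exact ⟨T, hT.2, hT.1⟩
  obtain ⟨T, hT1, hTlt⟩ := hex
  have hsub := intermediate_value_Icc' hT1 hFcont.continuousOn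
  have h1mem : (1:ℝ) ∈ Set.Icc (F T) (F 1) := ⟨hTlt.le, hF1⟩
  obtain ⟨t, ht, hFt⟩ := hsub h1mem
  refine ⟨t, ⟨lt_of_lt_of_le one_pos ht.1, (hFeq t).2 hFt⟩, ?_, ht.1⟩
  intro s hs hgs
  exact hFanti.injective (by rw [(hFeq s).1 hgs, hFt])

/-- Lemma `TargetUniqueIntersection`: for every `n ≥ 3` there is a unique
positive real `t` with `max(h_n, φ h_{n-1})^t = max(h_{n-1}, φ h_{n-2})^t + max(h_{n-2}, φ h_{n-3})^t`,
and moreover `t ≥ 1`. -/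
theorem stmt1 (n : ℕ) (hn : 3 ≤ n) :
    ∃ t : ℝ, (0 < t ∧ geq n t) ∧ (∀ s : ℝ, 0 < s → geq n s → s = t) ∧ 1 ≤ t := by
  obtain ⟨m, rfl⟩ : ∃ m, n = m + 3 := ⟨n - 3, by omega⟩
  have hs5a : Real.sqrt 5 < 3 := by
    nlinarith [Real.sq_sqrt (show (0:ℝ) ≤ 5 by norm_num), Real.sqrt_nonneg 5]
  have hs5b : (1:ℝ) < Real.sqrt 5 := by
    nlinarith [Real.sq_sqrt (show (0:ℝ) ≤ 5 by norm_num), Real.sqrt_nonneg 5]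
  have hφ1 : 1 < phiR := by unfold phiR; linarith
  have hφ2 : phiR < 2 := by unfold phiR; linarith
  set f0 : ℝ := (Nat.fib m : ℝ) with hf0def
  set f1 : ℝ := (Nat.fib (m + 1) : ℝ) with hf1def
  set f2 : ℝ := (Nat.fib (m + 2) : ℝ) with hf2def
  set f3 : ℝ := (Nat.fib (m + 3) : ℝ) with hf3def
  have rec1 : f2 = f1 + f0 := by
    rw [hf2def, hf1def, hf0def, Nat.fib_add_two]; push_cast; ring
  have rec2 : f3 = f2 + f1 := by
    rw [hf3def, hf2def, hf1def, show m + 3 = (m + 1) + 2 by ring, Nat.fib_add_two]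
    push_cast; ring
  have hf1 : (1:ℝ) ≤ f1 := by
    rw [hf1def]; exact_mod_cast Nat.fib_pos.2 (Nat.succ_pos m)
  have hf2 : (1:ℝ) ≤ f2 := by
    rw [hf2def]; exact_mod_cast Nat.fib_pos.2 (by omega)
  have hf0 : (0:ℝ) ≤ f0 := by rw [hf0def]; positivity
  have hf01 : f0 ≤ f1 := by
    rw [hf0def, hf1def]; exact_mod_cast Nat.fib_mono (Nat.le_succ m)
  have e1 : m + 3 - 1 = m + 2 := by omega
  have e2 : m + 3 - 2 = m + 1 := by omega
  have e3 : m + 2 - 1 = m + 1 := by omega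
  have e4 : m + 1 - 1 = m := by omega
  simp only [geq, gmax, e1, e2, e3, e4, ← hf0def, ← hf1def, ← hf2def, ← hf3def]
  have hphif1 : phiR * f1 < f3 := by nlinarith
  apply key_unique
  · exact lt_max_of_lt_left (by linarith)
  · exact lt_max_of_lt_left (by linarith)
  · apply max_lt
    · exact lt_max_of_lt_left (by linarith)
    · exact lt_max_of_lt_left hphif1
  · apply max_lt
    · exact lt_max_of_lt_left (by linarith)
    · refine lt_max_of_lt_left ?_
      have : phiR * f0 ≤ phiR * f1 := by nlinarith
      linarith
  · apply max_le
    · have h1 := le_max_left f2 (phiR * f1)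
      have h2 := le_max_left f1 (phiR * f0)
      linarith
    · have h1 := le_max_right f2 (phiR * f1)
      have h2 := le_max_right f1 (phiR * f0)
      have : phiR * f2 = phiR * f1 + phiR * f0 := by rw [rec1]; ring
      linarith
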